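/- Let a, b be rational numbers and τ a real number with τ ≠ 0 such that 21τ^5 + 35aτ^3 + 21bτ^2 + 7a^2τ + 2ab = 0, 15τ^4 + 15aτ^2 + 6bτ + a^2 = 0. Then there exists a nonzero rational number k with a = -6k^2, b = 7k^3, and τ = 2k. -/

import Mathlib

theorem stmt_12 (a b : ℚ) (τ : ℝ) (hτ : τ ≠ 0)
    (hf : 21 * τ ^ 5 + 35 * (a : ℝ) * τ ^ 3 + 21 * (b : ℝ) * τ ^ 2 +
        7 * (a : ℝ) ^ 2 * τ + 2 * (a : ℝ) * (b : ℝ) = 0)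
    (hg : 15 * τ ^ 4 + 15 * (a : ℝ) * τ ^ 2 + 6 * (b : ℝ) * τ + (a : ℝ) ^ 2 = 0) :
    ∃ k : ℚ, k ≠ 0 ∧ a = -6 * k ^ 2 ∧ b = 7 * k ^ 3 ∧ τ = 2 * (k : ℝ) := by
  -- Step 1: a ≠ 0
  have ha : a ≠ 0 := by
    intro ha0
    rw [ha0] at hf hg
    push_cast at hf hg
    have h1 : (21 * τ ^ 2) * (τ ^ 3 + (b : ℝ)) = 0 := by linear_combination hf
    have h2 : τ * (15 * τ ^ 3 + 6 * (b : ℝ)) = 0 := by linear_combination hg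
    have h1' : τ ^ 3 + (b : ℝ) = 0 := by
      rcases mul_eq_zero.mp h1 with h | h
      · have hsq : τ ^ 2 = 0 := by linarith
        exact absurd (pow_eq_zero_iff two_ne_zero |>.mp hsq) hτ
      · exact h
    have h2' : 15 * τ ^ 3 + 6 * (b : ℝ) = 0 := by
      rcases mul_eq_zero.mp h2 with h | h
      · exact absurd h hτ
      · exact h
    have hτ3 : τ ^ 3 = 0 := by linear_combination (1/9 : ℝ) * h2' - (2/3 : ℝ) * h1'
    exact hτ (pow_eq_zero_iff (by norm_num) |>.mp hτ3)
  -- Step 2: resultant identity over ℝ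
  have hres : (9 * (a : ℝ) * (49 * (a : ℝ) ^ 3 + 216 * (b : ℝ) ^ 2) *
      (132496 * (a : ℝ) ^ 6 - 222804 * (a : ℝ) ^ 3 * (b : ℝ) ^ 2 + 250047 * (b : ℝ) ^ 4)) = 0 := by
    linear_combination
      ((-6667920 * (a:ℝ)^6 * (b:ℝ) - 5347215 * (a:ℝ)^3 * (b:ℝ)^3 + 243045684 * (b:ℝ)^5)
        + (-192628800 * (a:ℝ)^7 - 672728490 * (a:ℝ)^4 * (b:ℝ)^2 + 511167510 * (a:ℝ) * (b:ℝ)^4) * τ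
        + (117879300 * (a:ℝ)^5 * (b:ℝ) + 208738215 * (a:ℝ)^2 * (b:ℝ)^3) * τ^2
        + (-216707400 * (a:ℝ)^6 - 636088950 * (a:ℝ)^3 * (b:ℝ)^2 + 607614210 * (b:ℝ)^4) * τ^3) * hf
      + ((58430736 * (a:ℝ)^8 + 172651500 * (a:ℝ)^5 * (b:ℝ)^2 - 312165819 * (a:ℝ)^2 * (b:ℝ)^4)
        + (81348624 * (a:ℝ)^6 * (b:ℝ) + 346978485 * (a:ℝ)^3 * (b:ℝ)^3 - 850659894 * (b:ℝ)^5) * τ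
        + (471940560 * (a:ℝ)^7 + 1535502906 * (a:ℝ)^4 * (b:ℝ)^2 - 1282741110 * (a:ℝ) * (b:ℝ)^4) * τ^2
        + (-165031020 * (a:ℝ)^5 * (b:ℝ) - 292233501 * (a:ℝ)^2 * (b:ℝ)^3) * τ^3
        + (303390360 * (a:ℝ)^6 + 890524530 * (a:ℝ)^3 * (b:ℝ)^2 - 850659894 * (b:ℝ)^4) * τ^4) * hg
  have hresQ : 9 * a * (49 * a ^ 3 + 216 * b ^ 2) *
      (132496 * a ^ 6 - 222804 * a ^ 3 * b ^ 2 + 250047 * b ^ 4) = 0 := by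
    exact_mod_cast hres
  -- Step 3: the quartic factor is positive
  have hQpos : 132496 * a ^ 6 - 222804 * a ^ 3 * b ^ 2 + 250047 * b ^ 4 > 0 := by
    have ha6 : a ^ 6 > 0 := by positivity
    nlinarith [sq_nonneg (2 * 250047 * b ^ 2 - 222804 * a ^ 3), sq_nonneg b]
  -- Step 4: 49 a^3 + 216 b^2 = 0
  have hL : 49 * a ^ 3 + 216 * b ^ 2 = 0 := by
    rcases mul_eq_zero.mp hresQ with h | h
    · rcases mul_eq_zero.mp h with h' | h'
      · exact absurd h' (by simpa using ha)
      · exact h'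
    · exact absurd h (ne_of_gt hQpos)
  -- Step 5: b ≠ 0, define k
  have hb : b ≠ 0 := by
    intro hb0
    rw [hb0] at hL
    have : a ^ 3 = 0 := by linarith
    exact ha (pow_eq_zero_iff (by norm_num) |>.mp this)
  set k : ℚ := -6 * b / (7 * a) with hkdef
  have hk : k ≠ 0 := by
    rw [hkdef]
    intro h0
    rcases div_eq_zero_iff.mp h0 with h | h
    · exact hb (by linarith)
    · rcases mul_eq_zero.mp h with h' | h'
      · norm_num at h'
      · exact ha h'
  have ha2 : a = -6 * k ^ 2 := by
    rw [hkdef]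
    field_simp
    ring_nf
    linear_combination hL
  have hb2 : b = 7 * k ^ 3 := by
    rw [hkdef]
    field_simp
    ring_nf
    linear_combination hL
  -- Step 6: τ = 2k
  have haR : (a : ℝ) = -6 * (k : ℝ) ^ 2 := by exact_mod_cast congrArg (Rat.cast (K := ℝ)) ha2
  have hbR : (b : ℝ) = 7 * (k : ℝ) ^ 3 := by exact_mod_cast congrArg (Rat.cast (K := ℝ)) hb2
  have hkR : (k : ℝ) ≠ 0 := by exact_mod_cast hk
  rw [haR, hbR] at hf hg
  have hτ2 : τ = 2 * (k : ℝ) := by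
    by_contra hne
    have hsub : τ - 2 * (k : ℝ) ≠ 0 := sub_ne_zero.mpr hne
    have h1 : 21 * τ ^ 4 + 42 * (k:ℝ) * τ ^ 3 - 126 * (k:ℝ) ^ 2 * τ ^ 2 -
        105 * (k:ℝ) ^ 3 * τ + 42 * (k:ℝ) ^ 4 = 0 := by
      have hfac : (τ - 2 * (k:ℝ)) * (21 * τ ^ 4 + 42 * (k:ℝ) * τ ^ 3 - 126 * (k:ℝ) ^ 2 * τ ^ 2 -
          105 * (k:ℝ) ^ 3 * τ + 42 * (k:ℝ) ^ 4) = 0 := by linear_combination hf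
      rcases mul_eq_zero.mp hfac with h | h
      · exact absurd h hsub
      · exact h
    have h2 : 15 * τ ^ 3 + 30 * (k:ℝ) * τ ^ 2 - 30 * (k:ℝ) ^ 2 * τ - 18 * (k:ℝ) ^ 3 = 0 := by
      have hfac : (τ - 2 * (k:ℝ)) * (15 * τ ^ 3 + 30 * (k:ℝ) * τ ^ 2 - 30 * (k:ℝ) ^ 2 * τ -
          18 * (k:ℝ) ^ 3) = 0 := by linear_combination hg
      rcases mul_eq_zero.mp hfac with h | h
      · exact absurd h hsub
      · exact h
    have hk6 : (2122848 : ℝ) * (k:ℝ) ^ 6 = 0 := by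
      linear_combination (-14800 * τ ^ 2 - 25600 * τ * (k:ℝ) + 26400 * (k:ℝ) ^ 2) * h1 +
        (20720 * τ ^ 3 + 35840 * τ ^ 2 * (k:ℝ) - 119840 * τ * (k:ℝ) ^ 2 - 56336 * (k:ℝ) ^ 3) * h2
    have : (k:ℝ) ^ 6 = 0 := by linarith
    exact hkR (pow_eq_zero_iff (by norm_num) |>.mp this)
  exact ⟨k, hk, ha2, hb2, hτ2⟩
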